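/- Any exact quantum algorithm (error probability 0) for searching an ordered list of N elements, in the phase-oracle query model, requires more than (ln(N) − 1)/π queries; more generally, with error probability at most ε it requires at least (1 − 2√(ε(1−ε)))·(H_N − 1)/π queries. -/

import Mathlib

open scoped BigOperators

noncomputable section OrderedSearchModel

/-- The phase oracle for the input string `x` (with cutoff `N`): a basis vector `b`
querying index `idx b` picks up the sign `(−1)^{x_{idx b}}` if `idx b < N`, and is
left unchanged otherwise. -/
def oracleApply (N M : ℕ) (x : ℕ → Bool) (idx : Fin M → ℕ)
    (ψ : EuclideanSpace ℂ (Fin M)) : EuclideanSpace ℂ (Fin M) :=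
  WithLp.toLp 2 (fun b => (if idx b < N ∧ x (idx b) then (-1 : ℂ) else 1) * ψ b)

/-- The state `(U O_x)^j U |init⟩` of the algorithm after `j` queries. -/
def stateAfter (N M : ℕ) (U : EuclideanSpace ℂ (Fin M) ≃ₗᵢ[ℂ] EuclideanSpace ℂ (Fin M))
    (idx : Fin M → ℕ) (x : ℕ → Bool) (init : EuclideanSpace ℂ (Fin M)) :
    ℕ → EuclideanSpace ℂ (Fin M)
  | 0 => U init
  | j + 1 => U (oracleApply N M x idx (stateAfter N M U idx x init j))

/-- Probability that measuring `ψ` in the computational basis yields an outcome with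
answer label `v`. -/
def successProb {M : ℕ} {α : Type} [DecidableEq α] (ans : Fin M → α) (v : α)
    (ψ : EuclideanSpace ℂ (Fin M)) : ℝ :=
  ∑ b ∈ Finset.univ.filter (fun b => ans b = v), ‖ψ b‖ ^ 2

/-- `x` is a valid ordered-search instance on `N` bits: nondecreasing and of nonzero
Hamming weight. -/
def SortedNonzero (N : ℕ) (x : ℕ → Bool) : Prop :=
  (∀ i j, i ≤ j → j < N → x i = true → x j = true) ∧ (∃ i, i < N ∧ x i = true)

/-- The answer to the ordered search problem: the position of the leftmost `1`. -/
def fval (x : ℕ → Bool) : ℕ := sInf {i | x i = true}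

end OrderedSearchModel

noncomputable section Aux
open Finset Real

variable {N M : ℕ}

local notation "⟪" x ", " y "⟫" => @inner ℂ _ _ x y

lemma sum_sq_of_norm_one (ψ : EuclideanSpace ℂ (Fin M)) (h : ‖ψ‖ = 1) :
    ∑ b : Fin M, ‖ψ b‖ ^ 2 = 1 := by
  have h2 := EuclideanSpace.norm_eq ψ
  rw [h] at h2
  have hnn : (0:ℝ) ≤ ∑ b : Fin M, ‖ψ b‖ ^ 2 :=
    Finset.sum_nonneg fun b _ => sq_nonneg _
  calc ∑ b : Fin M, ‖ψ b‖ ^ 2 = (Real.sqrt (∑ b : Fin M, ‖ψ b‖ ^ 2))^2 :=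
        (Real.sq_sqrt hnn).symm
    _ = 1 := by rw [← h2]; norm_num

lemma norm_oracleApply (x : ℕ → Bool) (idx : Fin M → ℕ) (ψ : EuclideanSpace ℂ (Fin M)) :
    ‖oracleApply N M x idx ψ‖ = ‖ψ‖ := by
  rw [EuclideanSpace.norm_eq, EuclideanSpace.norm_eq]
  congr 1
  apply Finset.sum_congr rfl
  intro b _
  show ‖(if idx b < N ∧ x (idx b) then (-1 : ℂ) else 1) * ψ b‖ ^ 2 = ‖ψ b‖ ^ 2
  rw [norm_mul]
  split_ifs <;> simp

lemma norm_stateAfter (U : EuclideanSpace ℂ (Fin M) ≃ₗᵢ[ℂ] EuclideanSpace ℂ (Fin M))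
    (idx : Fin M → ℕ) (x : ℕ → Bool) (init : EuclideanSpace ℂ (Fin M))
    (hinit : ‖init‖ = 1) (t : ℕ) : ‖stateAfter N M U idx x init t‖ = 1 := by
  induction t with
  | zero => rw [stateAfter, U.norm_map]; exact hinit
  | succ t ih => rw [stateAfter, U.norm_map, norm_oracleApply]; exact ih

lemma sign_prod (m j k N : ℕ) (hjk : j < k) (hk : k < N) :
    (if m < N ∧ j ≤ m then (-1:ℂ) else 1) * (if m < N ∧ k ≤ m then (-1:ℂ) else 1)
    = if j ≤ m ∧ m < k then (-1:ℂ) else 1 := by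
  split_ifs
  all_goals try omega
  all_goals norm_num

lemma oracle_sign (j : ℕ) (idx : Fin M → ℕ) (ψ : EuclideanSpace ℂ (Fin M)) (b : Fin M) :
    oracleApply N M (fun i => decide (j ≤ i)) idx ψ b
    = (if idx b < N ∧ j ≤ idx b then (-1:ℂ) else 1) * ψ b := by
  show (if idx b < N ∧ (decide (j ≤ idx b) = true) then (-1 : ℂ) else 1) * ψ b = _
  simp only [decide_eq_true_eq]

lemma inner_oracle_diff (j k : ℕ) (hjk : j < k) (hk : k < N) (idx : Fin M → ℕ)
    (ψ φ : EuclideanSpace ℂ (Fin M)) :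
    RCLike.re (⟪ψ, φ⟫)
      - RCLike.re (⟪oracleApply N M (fun i => decide (j ≤ i)) idx ψ,
          oracleApply N M (fun i => decide (k ≤ i)) idx φ⟫)
    = ∑ b ∈ Finset.univ.filter (fun b : Fin M => j ≤ idx b ∧ idx b < k),
        2 * ((starRingEnd ℂ) (ψ b) * φ b).re := by
  rw [PiLp.inner_apply, PiLp.inner_apply]
  rw [map_sum, map_sum, ← Finset.sum_sub_distrib]
  rw [Finset.sum_filter]
  apply Finset.sum_congr rfl
  intro b _
  rw [oracle_sign, oracle_sign]
  set cj : ℂ := if idx b < N ∧ j ≤ idx b then (-1:ℂ) else 1 with hcj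
  set ck : ℂ := if idx b < N ∧ k ≤ idx b then (-1:ℂ) else 1 with hck
  have hinner : (⟪cj * ψ b, ck * φ b⟫ : ℂ) = (cj * ck) * ((starRingEnd ℂ) (ψ b) * φ b) := by
    rw [RCLike.inner_apply, map_mul]
    have : (starRingEnd ℂ) cj = cj := by rw [hcj]; split_ifs <;> simp
    rw [this]; ring
  have hsign : cj * ck = if j ≤ idx b ∧ idx b < k then (-1:ℂ) else 1 := by
    rw [hcj, hck]
    exact sign_prod (idx b) j k N hjk hk
  rw [hinner, hsign]
  have hz : RCLike.re (⟪ψ b, φ b⟫ : ℂ) = ((starRingEnd ℂ) (ψ b) * φ b).re := by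
    rw [RCLike.inner_apply, mul_comm]; rfl
  split_ifs with h
  · rw [hz]
    simp only [RCLike.re_to_complex, neg_one_mul, Complex.neg_re]
    ring
  · rw [hz]
    simp only [RCLike.re_to_complex, one_mul]
    ring

end Aux


section AuxLemmas
open Real Finset

lemma arctan_slope {b a : ℝ} (hb : 0 ≤ b) (hba : b ≤ a) :
    (a - b) / (1 + a ^ 2) ≤ arctan a - arctan b := by
  rcases eq_or_lt_of_le hba with h | h
  · simp [h]
  obtain ⟨c, hc, hder⟩ := exists_hasDerivAt_eq_slope arctan (fun x => 1 / (1 + x ^ 2)) h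
    (Real.continuous_arctan.continuousOn) (fun x _ => Real.hasDerivAt_arctan x)
  have hc2 : c ≤ a := le_of_lt hc.2
  have h1 : (0:ℝ) < 1 + c ^ 2 := by positivity
  have h2 : (0:ℝ) < 1 + a ^ 2 := by positivity
  have : (a - b) / (1 + a ^ 2) ≤ (a - b) / (1 + c ^ 2) := by
    apply div_le_div_of_nonneg_left (by linarith) h1
    nlinarith [hc.1, hc.2]
  calc (a - b) / (1 + a ^ 2) ≤ (a - b) / (1 + c ^ 2) := this
    _ = arctan a - arctan b := by
        have hab : a - b ≠ 0 := by linarith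
        field_simp at hder
        field_simp
        nlinarith [hder]

lemma hilbert_row (p : ℝ) (hp : 1 ≤ p) (E : ℕ) :
    ∑ e ∈ range E, 2 * sqrt p / ((p + (2*(e:ℝ)+1)) * sqrt (2*(e:ℝ)+1)) ≤ π := by
  have hp0 : 0 < p := by linarith
  have key : ∀ E : ℕ, ∑ e ∈ range E, 2 * sqrt p / ((p + (2*(e:ℝ)+1)) * sqrt (2*(e:ℝ)+1))
      ≤ 2 * arctan (Real.sqrt ((2*(E:ℝ)-1)/p)) := by
    intro E
    induction E with
    | zero =>
      have h0 : ((2:ℝ)*((0:ℕ):ℝ)-1)/p ≤ 0 := by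
        push_cast
        rw [div_nonpos_iff]
        right; constructor <;> linarith
      rw [Finset.range_zero, Finset.sum_empty, Real.sqrt_eq_zero'.mpr h0, Real.arctan_zero]
      simp
    | succ E ih =>
      rw [Finset.sum_range_succ]
      set q : ℝ := 2*(E:ℝ)+1 with hqdef
      have hq1 : (1:ℝ) ≤ q := by
        rw [hqdef]
        have : (0:ℝ) ≤ (E:ℝ) := Nat.cast_nonneg E
        linarith
      have hq0 : (0:ℝ) < q := by linarith
      set a : ℝ := Real.sqrt (q/p) with hadef
      set b : ℝ := Real.sqrt ((q-2)/p) with hbdef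
      have hcast : (2*((E:ℕ):ℝ)-1) = q - 2 := by push_cast; ring
      have hcast2 : (2*(((E:ℕ)+1:ℕ):ℝ)-1) = q := by push_cast; ring
      have hgoal : 2 * Real.sqrt p / ((p + q) * Real.sqrt q) ≤ 2 * arctan a - 2 * arctan b := by
        have hslope : (a - b) / (1 + a ^ 2) ≤ arctan a - arctan b := by
          apply arctan_slope (Real.sqrt_nonneg _)
          exact Real.sqrt_le_sqrt ((div_le_div_iff_of_pos_right hp0).mpr (by linarith))
        have ha2 : a ^ 2 = q / p := Real.sq_sqrt (by positivity)
        have hsp : (0:ℝ) < Real.sqrt p := Real.sqrt_pos.mpr hp0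
        have hsq : (0:ℝ) < Real.sqrt q := Real.sqrt_pos.mpr hq0
        have haeq : a = Real.sqrt q / Real.sqrt p := by
          rw [hadef, Real.sqrt_div hq0.le]
        have ha0 : 0 < a := by rw [haeq]; positivity
        have hkey : Real.sqrt p / ((p + q) * Real.sqrt q) ≤ (a - b) / (1 + a ^ 2) := by
          have hab : a - b ≥ 1 / (p * a) := by
            rcases le_or_gt (q - 2) 0 with h2 | h2
            · -- b = 0
              have hb0 : b = 0 := by
                rw [hbdef, Real.sqrt_eq_zero']
                exact div_nonpos_of_nonpos_of_nonneg h2 hp0.le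
              rw [hb0, sub_zero, ge_iff_le, div_le_iff₀ (by positivity)]
              -- 1 ≤ a * (p * a) = a^2 * p = q
              have : a * (p * a) = q := by
                have : a * (p * a) = a^2 * p := by ring
                rw [this, ha2]; field_simp
              rw [this]; exact hq1
            · have hb2 : b ^ 2 = (q-2)/p := Real.sq_sqrt (by positivity)
              have hb0 : 0 ≤ b := Real.sqrt_nonneg _
              have hba : b ≤ a :=
                Real.sqrt_le_sqrt ((div_le_div_iff_of_pos_right hp0).mpr (by linarith))
              have hprod : (a - b) * (a + b) = 2 / p := by
                have : (a - b) * (a + b) = a^2 - b^2 := by ring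
                rw [this, ha2, hb2]; ring
              rw [ge_iff_le, div_le_iff₀ (by positivity)]
              -- 1 ≤ (a - b) * (p * a)
              have h1 : (a-b)*(a+b) ≤ (a-b)*(2*a) :=
                mul_le_mul_of_nonneg_left (by linarith) (sub_nonneg.mpr hba)
              have h2 : 2/p ≤ (a-b)*(2*a) := hprod ▸ h1
              have h3 : p * (2/p) ≤ p * ((a-b)*(2*a)) := mul_le_mul_of_nonneg_left h2 hp0.le
              have h4 : p * (2/p) = 2 := by field_simp
              nlinarith [h3, h4]
          have h1a : 1 + a ^ 2 = (p + q) / p := by rw [ha2]; field_simp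
          rw [h1a]
          rw [div_le_div_iff₀ (by positivity) (by positivity)]
          -- sqrt p * ((p+q)/p)... : √p * ((p+q)/p) ≤ (a−b) * ((p+q) * √q)
          have h1ainv : 1 / (p * a) = Real.sqrt p / (p * Real.sqrt q) := by
            rw [haeq]; field_simp
          have : Real.sqrt p / (p * Real.sqrt q) ≤ a - b := by rw [← h1ainv]; exact hab
          calc Real.sqrt p * ((p + q) / p)
              = (Real.sqrt p / (p * Real.sqrt q)) * ((p + q) * Real.sqrt q) := by
                field_simp
            _ ≤ (a - b) * ((p + q) * Real.sqrt q) := by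
                apply mul_le_mul_of_nonneg_right this (by positivity)
        calc 2 * Real.sqrt p / ((p + q) * Real.sqrt q)
            = 2 * (Real.sqrt p / ((p + q) * Real.sqrt q)) := by ring
          _ ≤ 2 * ((a - b) / (1 + a ^ 2)) := by linarith [hkey]
          _ ≤ 2 * (arctan a - arctan b) := by linarith [hslope]
          _ = 2 * arctan a - 2 * arctan b := by ring
      rw [hcast2]
      rw [hcast] at ih
      calc ∑ e ∈ range E, 2 * Real.sqrt p / ((p + (2*(e:ℝ)+1)) * Real.sqrt (2*(e:ℝ)+1))
            + 2 * Real.sqrt p / ((p + (2*(E:ℝ)+1)) * Real.sqrt (2*(E:ℝ)+1))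
          ≤ 2 * arctan b + (2 * arctan a - 2 * arctan b) := by
            apply add_le_add ih
            exact hgoal
        _ = 2 * arctan a := by ring
  calc ∑ e ∈ range E, 2 * sqrt p / ((p + (2*(e:ℝ)+1)) * sqrt (2*(e:ℝ)+1))
      ≤ 2 * arctan (Real.sqrt ((2*(E:ℝ)-1)/p)) := key E
    _ ≤ 2 * (π/2) := by linarith [Real.arctan_lt_pi_div_two (Real.sqrt ((2*(E:ℝ)-1)/p))]
    _ = π := by ring

/-- weight kernel -/
noncomputable def hkern (d e : ℕ) : ℝ :=
  Real.sqrt (2*(d:ℝ)+1) / (Real.sqrt (2*(e:ℝ)+1) * ((d:ℝ)+(e:ℝ)+1))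

lemma hkern_nonneg (d e : ℕ) : 0 ≤ hkern d e := by
  unfold hkern; positivity

lemma hkern_rowsum (a B : ℕ) : ∑ x ∈ range B, hkern a x ≤ π := by
  have hp : (1:ℝ) ≤ 2*(a:ℝ)+1 := by
    have : (0:ℝ) ≤ (a:ℝ) := Nat.cast_nonneg a
    linarith
  have := hilbert_row (2*(a:ℝ)+1) hp B
  refine le_trans (le_of_eq ?_) this
  apply Finset.sum_congr rfl
  intro e _
  unfold hkern
  have h1 : (0:ℝ) < Real.sqrt (2*(e:ℝ)+1) := Real.sqrt_pos.mpr (by positivity)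
  have h2 : ((a:ℝ)+(e:ℝ)+1) ≠ 0 := by positivity
  rw [div_eq_div_iff (by positivity) (by positivity)]
  ring

lemma hilbert_bilinear (u v : ℕ → ℝ) (D E : ℕ)
    (hu : ∀ d, 0 ≤ u d) (hv : ∀ e, 0 ≤ v e) :
    ∑ d ∈ range D, ∑ e ∈ range E, u d * v e / ((d:ℝ)+(e:ℝ)+1)
      ≤ π/2 * ((∑ d ∈ range D, u d ^ 2) + (∑ e ∈ range E, v e ^ 2)) := by
  have term : ∀ d e : ℕ, u d * v e / ((d:ℝ)+(e:ℝ)+1)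
      ≤ (u d ^ 2 * hkern d e + v e ^ 2 * hkern e d)/2 := by
    intro d e
    set sp := Real.sqrt (2*(d:ℝ)+1) with hspdef
    set sq := Real.sqrt (2*(e:ℝ)+1) with hsqdef
    have hsp : 0 < sp := Real.sqrt_pos.mpr (by positivity)
    have hsq : 0 < sq := Real.sqrt_pos.mpr (by positivity)
    have hs : (0:ℝ) < (d:ℝ)+(e:ℝ)+1 := by positivity
    have hkde : hkern d e = sp / (sq * ((d:ℝ)+(e:ℝ)+1)) := rfl
    have hked : hkern e d = sq / (sp * ((e:ℝ)+(d:ℝ)+1)) := rfl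
    have hcomm : (e:ℝ)+(d:ℝ)+1 = (d:ℝ)+(e:ℝ)+1 := by ring
    rw [hkde, hked, hcomm]
    have key : (u d ^ 2 * (sp/(sq*((d:ℝ)+(e:ℝ)+1))) + v e ^ 2 * (sq/(sp*((d:ℝ)+(e:ℝ)+1))))/2
        - u d * v e / ((d:ℝ)+(e:ℝ)+1)
        = (u d * sp - v e * sq)^2 / (2*sp*sq*((d:ℝ)+(e:ℝ)+1)) := by
      field_simp
      ring
    nlinarith [key, div_nonneg (sq_nonneg (u d * sp - v e * sq))
      (by positivity : (0:ℝ) ≤ 2*sp*sq*((d:ℝ)+(e:ℝ)+1))]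
  have hSA : ∑ d ∈ range D, ∑ e ∈ range E, u d ^ 2 * hkern d e
      ≤ (∑ d ∈ range D, u d ^ 2) * π := by
    calc ∑ d ∈ range D, ∑ e ∈ range E, u d ^ 2 * hkern d e
        = ∑ d ∈ range D, u d ^ 2 * ∑ e ∈ range E, hkern d e :=
          Finset.sum_congr rfl fun d _ => (Finset.mul_sum _ _ _).symm
      _ ≤ ∑ d ∈ range D, u d ^ 2 * π :=
          Finset.sum_le_sum fun d _ =>
            mul_le_mul_of_nonneg_left (hkern_rowsum d E) (sq_nonneg _)
      _ = (∑ d ∈ range D, u d ^ 2) * π := (Finset.sum_mul _ _ _).symm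
  have hSB : ∑ d ∈ range D, ∑ e ∈ range E, v e ^ 2 * hkern e d
      ≤ (∑ e ∈ range E, v e ^ 2) * π := by
    rw [Finset.sum_comm]
    calc ∑ e ∈ range E, ∑ d ∈ range D, v e ^ 2 * hkern e d
        = ∑ e ∈ range E, v e ^ 2 * ∑ d ∈ range D, hkern e d :=
          Finset.sum_congr rfl fun e _ => (Finset.mul_sum _ _ _).symm
      _ ≤ ∑ e ∈ range E, v e ^ 2 * π :=
          Finset.sum_le_sum fun e _ =>
            mul_le_mul_of_nonneg_left (hkern_rowsum e D) (sq_nonneg _)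
      _ = (∑ e ∈ range E, v e ^ 2) * π := (Finset.sum_mul _ _ _).symm
  have hmain : ∑ d ∈ range D, ∑ e ∈ range E, u d * v e / ((d:ℝ)+(e:ℝ)+1)
      ≤ ∑ d ∈ range D, ∑ e ∈ range E, (u d ^ 2 * hkern d e + v e ^ 2 * hkern e d)/2 := by
    apply Finset.sum_le_sum; intro d _
    apply Finset.sum_le_sum; intro e _
    exact term d e
  have hsplit : ∑ d ∈ range D, ∑ e ∈ range E, (u d ^ 2 * hkern d e + v e ^ 2 * hkern e d)/2
      = ((∑ d ∈ range D, ∑ e ∈ range E, u d ^ 2 * hkern d e)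
        + (∑ d ∈ range D, ∑ e ∈ range E, v e ^ 2 * hkern e d))/2 := by
    simp only [show ∀ x y : ℝ, (x+y)/2 = x/2 + y/2 from fun x y => by ring,
      Finset.sum_add_distrib, ← Finset.sum_div]
  rw [hsplit] at hmain
  linarith [hmain, hSA, hSB]

section CS
variable {β : Type*}

lemma sum_mul_le_sqrt (s : Finset β) (f g : β → ℝ) :
    ∑ b ∈ s, f b * g b ≤ Real.sqrt (∑ b ∈ s, f b ^ 2) * Real.sqrt (∑ b ∈ s, g b ^ 2) := by
  have h := Finset.sum_mul_sq_le_sq_mul_sq s f g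
  rcases le_or_gt (∑ b ∈ s, f b * g b) 0 with h0 | h0
  · exact h0.trans (by positivity)
  · calc ∑ b ∈ s, f b * g b = Real.sqrt ((∑ b ∈ s, f b * g b)^2) := (Real.sqrt_sq h0.le).symm
      _ ≤ Real.sqrt ((∑ b ∈ s, f b ^ 2) * (∑ b ∈ s, g b ^ 2)) := Real.sqrt_le_sqrt h
      _ = _ := Real.sqrt_mul (Finset.sum_nonneg fun b _ => sq_nonneg _) _
end CS

section Fib
variable {M : ℕ} (idx : Fin M → ℕ)

noncomputable def fibM (ψ : ℕ → EuclideanSpace ℂ (Fin M)) (i j : ℕ) : ℝ :=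
  ∑ b ∈ Finset.univ.filter (fun b => idx b = i), ‖ψ j b‖ ^ 2

noncomputable def fibA (ψ : ℕ → EuclideanSpace ℂ (Fin M)) (i j : ℕ) : ℝ :=
  Real.sqrt (fibM idx ψ i j)

lemma fibM_nonneg (ψ : ℕ → EuclideanSpace ℂ (Fin M)) (i j : ℕ) : 0 ≤ fibM idx ψ i j :=
  Finset.sum_nonneg fun b _ => sq_nonneg _

lemma fibA_nonneg (ψ : ℕ → EuclideanSpace ℂ (Fin M)) (i j : ℕ) : 0 ≤ fibA idx ψ i j :=
  Real.sqrt_nonneg _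

lemma fibA_sq (ψ : ℕ → EuclideanSpace ℂ (Fin M)) (i j : ℕ) :
    fibA idx ψ i j ^ 2 = fibM idx ψ i j := Real.sq_sqrt (fibM_nonneg idx ψ i j)

lemma cs_fiber (ψ : ℕ → EuclideanSpace ℂ (Fin M)) (i j k : ℕ) :
    ∑ b ∈ Finset.univ.filter (fun b => idx b = i), ‖ψ j b‖ * ‖ψ k b‖
      ≤ fibA idx ψ i j * fibA idx ψ i k :=
  sum_mul_le_sqrt _ _ _

lemma fibM_total (N : ℕ) (ψ : ℕ → EuclideanSpace ℂ (Fin M)) (j : ℕ)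
    (h : ∑ b : Fin M, ‖ψ j b‖ ^ 2 = 1) :
    ∑ i ∈ range N, fibM idx ψ i j ≤ 1 := by
  have hfib : ∀ i ∈ range N,
      fibM idx ψ i j
      = ∑ b ∈ (Finset.univ.filter (fun b => idx b < N)).filter (fun b => idx b = i), ‖ψ j b‖^2 := by
    intro i hi
    rw [Finset.filter_filter]
    apply Finset.sum_congr _ (fun _ _ => rfl)
    apply Finset.filter_congr
    intro b _
    simp only [Finset.mem_range] at hi
    constructor
    · intro hb; exact ⟨hb ▸ hi, hb⟩
    · intro hb; exact hb.2
  rw [Finset.sum_congr rfl hfib,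
    Finset.sum_fiberwise_of_maps_to (fun b hb => by
      simp only [Finset.mem_filter] at hb; exact Finset.mem_range.mpr hb.2)]
  rw [← h]
  exact Finset.sum_le_sum_of_subset_of_nonneg (Finset.filter_subset _ _)
    (fun b _ _ => sq_nonneg _)

end Fib

section Band
variable {M : ℕ} (idx : Fin M → ℕ)

lemma sum_over_band (j k : ℕ) (f : Fin M → ℝ) :
    ∑ b ∈ Finset.univ.filter (fun b => j ≤ idx b ∧ idx b < k), f b
    = ∑ i ∈ Ico j k, ∑ b ∈ Finset.univ.filter (fun b => idx b = i), f b := by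
  rw [← Finset.sum_fiberwise_of_maps_to (g := idx) (t := Ico j k)
    (s := Finset.univ.filter (fun b => j ≤ idx b ∧ idx b < k))
    (fun b hb => by simp only [Finset.mem_filter] at hb; exact Finset.mem_Ico.mpr hb.2) f]
  apply Finset.sum_congr rfl
  intro i hi
  simp only [Finset.mem_Ico] at hi
  congr 1
  rw [Finset.filter_filter]
  apply Finset.filter_congr
  intro b _
  constructor
  · intro hb; exact hb.2
  · intro hb; exact ⟨⟨hb ▸ hi.1, hb ▸ hi.2⟩, hb⟩

end Band

section Reorder

lemma sum_indicator_Ico (a b n : ℕ) (hbn : b ≤ n) (F : ℕ → ℝ) :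
    ∑ i ∈ Ico a b, F i = ∑ i ∈ range n, if a ≤ i ∧ i < b then F i else 0 := by
  rw [← Finset.sum_filter]
  apply Finset.sum_congr _ (fun _ _ => rfl)
  ext i
  simp only [Finset.mem_Ico, Finset.mem_filter, Finset.mem_range]
  omega

lemma triple_reorder (N : ℕ) (F : ℕ → ℕ → ℕ → ℝ) :
    ∑ j ∈ range N, ∑ k ∈ Ico (j+1) N, ∑ i ∈ Ico j k, F j k i
    = ∑ i ∈ range N, ∑ j ∈ range (i+1), ∑ k ∈ Ico (i+1) N, F j k i := by
  have lhs_eq : ∑ j ∈ range N, ∑ k ∈ Ico (j+1) N, ∑ i ∈ Ico j k, F j k i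
      = ∑ j ∈ range N, ∑ k ∈ range N, ∑ i ∈ range N,
          if j ≤ i ∧ i < k then F j k i else 0 := by
    apply Finset.sum_congr rfl; intro j _
    rw [sum_indicator_Ico (j+1) N N le_rfl]
    apply Finset.sum_congr rfl; intro k hk
    simp only [Finset.mem_range] at hk
    by_cases hjk : j + 1 ≤ k
    · rw [if_pos ⟨hjk, hk⟩, sum_indicator_Ico j k N hk.le]
    · rw [if_neg (by omega)]
      symm; apply Finset.sum_eq_zero
      intro i _
      rw [if_neg (by omega)]
  have rhs_eq : ∑ i ∈ range N, ∑ j ∈ range (i+1), ∑ k ∈ Ico (i+1) N, F j k i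
      = ∑ i ∈ range N, ∑ j ∈ range N, ∑ k ∈ range N,
          if j ≤ i ∧ i < k then F j k i else 0 := by
    apply Finset.sum_congr rfl; intro i hi
    simp only [Finset.mem_range] at hi
    rw [show (range (i+1) : Finset ℕ) = Ico 0 (i+1) from Finset.range_eq_Ico (i+1)]
    rw [sum_indicator_Ico 0 (i+1) N (by omega)]
    apply Finset.sum_congr rfl; intro j hj
    simp only [Finset.mem_range] at hj
    by_cases hji : j ≤ i
    · rw [if_pos ⟨Nat.zero_le _, by omega⟩, sum_indicator_Ico (i+1) N N le_rfl]
      apply Finset.sum_congr rfl; intro k hk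
      simp only [Finset.mem_range] at hk
      by_cases hik : i < k
      · rw [if_pos ⟨by omega, hk⟩, if_pos ⟨hji, hik⟩]
      · rw [if_neg (by omega), if_neg (by omega)]
    · rw [if_neg (by omega)]
      symm; apply Finset.sum_eq_zero
      intro k _
      rw [if_neg (by omega)]
  rw [lhs_eq, rhs_eq]
  rw [Finset.sum_congr rfl (fun j _ => Finset.sum_comm)]
  exact Finset.sum_comm
end Reorder

section PerI
variable {M : ℕ}

lemma per_i_bound (N : ℕ) (idx : Fin M → ℕ) (ψ : ℕ → EuclideanSpace ℂ (Fin M))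
    (i : ℕ) (hi : i < N) :
    ∑ j ∈ range (i+1), ∑ k ∈ Ico (i+1) N,
        2 * fibA idx ψ i j * fibA idx ψ i k / (((k - j : ℕ)) : ℝ)
    ≤ π * ∑ j ∈ range N, fibM idx ψ i j := by
  set u : ℕ → ℝ := fun d => fibA idx ψ i (i - d) with hu
  set v : ℕ → ℝ := fun e => fibA idx ψ i (i+1+e) with hv
  have hstep1 : ∑ j ∈ range (i+1), ∑ k ∈ Ico (i+1) N,
      2 * fibA idx ψ i j * fibA idx ψ i k / (((k - j : ℕ)) : ℝ)
      = ∑ d ∈ range (i+1), ∑ e ∈ range (N - (i+1)),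
          2 * (u d * v e / ((d:ℝ)+(e:ℝ)+1)) := by
    rw [← Finset.sum_range_reflect]
    apply Finset.sum_congr rfl
    intro d hd
    simp only [Finset.mem_range] at hd
    have hd' : i + 1 - 1 - d = i - d := by omega
    rw [hd', Finset.sum_Ico_eq_sum_range]
    apply Finset.sum_congr rfl
    intro e _
    have hsub : (i + 1 + e - (i - d) : ℕ) = d + e + 1 := by omega
    rw [hsub]
    push_cast
    rw [hu, hv]
    ring
  have hpull : ∑ d ∈ range (i+1), ∑ e ∈ range (N-(i+1)), 2 * (u d * v e / ((d:ℝ)+(e:ℝ)+1))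
      = 2 * ∑ d ∈ range (i+1), ∑ e ∈ range (N-(i+1)), u d * v e / ((d:ℝ)+(e:ℝ)+1) := by
    rw [Finset.mul_sum]
    apply Finset.sum_congr rfl; intro d _
    rw [Finset.mul_sum]
  rw [hstep1, hpull]
  have hb := hilbert_bilinear u v (i+1) (N - (i+1))
    (fun d => fibA_nonneg idx ψ i (i-d)) (fun e => fibA_nonneg idx ψ i (i+1+e))
  have hb2 : 2 * ∑ d ∈ range (i+1), ∑ e ∈ range (N-(i+1)), u d * v e / ((d:ℝ)+(e:ℝ)+1)
      ≤ π * ((∑ d ∈ range (i+1), u d ^ 2) + (∑ e ∈ range (N-(i+1)), v e ^ 2)) := by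
    linarith [hb]
  have hsum1 : ∑ d ∈ range (i+1), u d ^ 2 = ∑ j ∈ range (i+1), fibM idx ψ i j := by
    rw [← Finset.sum_range_reflect]
    apply Finset.sum_congr rfl
    intro d hd
    simp only [Finset.mem_range] at hd
    have h1 : i + 1 - 1 - d = i - d := by omega
    rw [h1]
    show fibA idx ψ i (i - (i - d)) ^ 2 = fibM idx ψ i d
    rw [show i - (i - d) = d from by omega]
    exact fibA_sq idx ψ i d
  have hsum2 : ∑ e ∈ range (N-(i+1)), v e ^ 2 = ∑ k ∈ Ico (i+1) N, fibM idx ψ i k := by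
    rw [Finset.sum_Ico_eq_sum_range]
    apply Finset.sum_congr rfl
    intro e _
    rw [hv]
    exact fibA_sq idx ψ i (i+1+e)
  have hsum3 : (∑ j ∈ range (i+1), fibM idx ψ i j) + ∑ k ∈ Ico (i+1) N, fibM idx ψ i k
      = ∑ j ∈ range N, fibM idx ψ i j := by
    rw [show (range (i+1) : Finset ℕ) = Ico 0 (i+1) from Finset.range_eq_Ico (i+1),
      show (range N : Finset ℕ) = Ico 0 N from Finset.range_eq_Ico N]
    exact Finset.sum_Ico_consecutive _ (Nat.zero_le _) (by omega)
  calc 2 * ∑ d ∈ range (i+1), ∑ e ∈ range (N-(i+1)), u d * v e / ((d:ℝ)+(e:ℝ)+1)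
      ≤ π * ((∑ d ∈ range (i+1), u d ^ 2) + (∑ e ∈ range (N-(i+1)), v e ^ 2)) := hb2
    _ = π * ∑ j ∈ range N, fibM idx ψ i j := by rw [hsum1, hsum2, hsum3]
end PerI

section StepCore
variable {M : ℕ}

lemma re_term_le (z w : ℂ) : ((starRingEnd ℂ) z * w).re ≤ ‖z‖ * ‖w‖ := by
  calc ((starRingEnd ℂ) z * w).re ≤ ‖(starRingEnd ℂ) z * w‖ := Complex.re_le_norm _
    _ = ‖z‖ * ‖w‖ := by rw [norm_mul, Complex.norm_conj]

lemma step_core (N : ℕ) (idx : Fin M → ℕ) (ψ : ℕ → EuclideanSpace ℂ (Fin M))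
    (hψ : ∀ j, j < N → ∑ b : Fin M, ‖ψ j b‖ ^ 2 = 1) :
    ∑ j ∈ range N, ∑ k ∈ Ico (j+1) N, (1/(((k-j : ℕ)):ℝ)) *
      (∑ b ∈ Finset.univ.filter (fun b : Fin M => j ≤ idx b ∧ idx b < k),
        2 * ((starRingEnd ℂ) (ψ j b) * ψ k b).re)
    ≤ π * N := by
  have hband : ∀ j k : ℕ,
      (∑ b ∈ Finset.univ.filter (fun b : Fin M => j ≤ idx b ∧ idx b < k),
        2 * ((starRingEnd ℂ) (ψ j b) * ψ k b).re)
      ≤ ∑ i ∈ Ico j k, 2 * fibA idx ψ i j * fibA idx ψ i k := by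
    intro j k
    calc ∑ b ∈ Finset.univ.filter (fun b : Fin M => j ≤ idx b ∧ idx b < k),
          2 * ((starRingEnd ℂ) (ψ j b) * ψ k b).re
        ≤ ∑ b ∈ Finset.univ.filter (fun b : Fin M => j ≤ idx b ∧ idx b < k),
          2 * (‖ψ j b‖ * ‖ψ k b‖) := by
          apply Finset.sum_le_sum
          intro b _
          have := re_term_le (ψ j b) (ψ k b)
          linarith
      _ = ∑ i ∈ Ico j k, ∑ b ∈ Finset.univ.filter (fun b : Fin M => idx b = i),
            2 * (‖ψ j b‖ * ‖ψ k b‖) := sum_over_band idx j k _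
      _ ≤ ∑ i ∈ Ico j k, 2 * fibA idx ψ i j * fibA idx ψ i k := by
          apply Finset.sum_le_sum
          intro i _
          have hcs := cs_fiber idx ψ i j k
          calc ∑ b ∈ Finset.univ.filter (fun b : Fin M => idx b = i),
                2 * (‖ψ j b‖ * ‖ψ k b‖)
              = 2 * ∑ b ∈ Finset.univ.filter (fun b : Fin M => idx b = i),
                  ‖ψ j b‖ * ‖ψ k b‖ := by rw [Finset.mul_sum]
            _ ≤ 2 * (fibA idx ψ i j * fibA idx ψ i k) := by linarith
            _ = 2 * fibA idx ψ i j * fibA idx ψ i k := by ring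
  calc ∑ j ∈ range N, ∑ k ∈ Ico (j+1) N, (1/(((k-j : ℕ)):ℝ)) *
      (∑ b ∈ Finset.univ.filter (fun b : Fin M => j ≤ idx b ∧ idx b < k),
        2 * ((starRingEnd ℂ) (ψ j b) * ψ k b).re)
      ≤ ∑ j ∈ range N, ∑ k ∈ Ico (j+1) N, (1/(((k-j : ℕ)):ℝ)) *
          ∑ i ∈ Ico j k, 2 * fibA idx ψ i j * fibA idx ψ i k := by
        apply Finset.sum_le_sum; intro j _
        apply Finset.sum_le_sum; intro k _
        exact mul_le_mul_of_nonneg_left (hband j k) (by positivity)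
    _ = ∑ j ∈ range N, ∑ k ∈ Ico (j+1) N, ∑ i ∈ Ico j k,
          2 * fibA idx ψ i j * fibA idx ψ i k / (((k-j : ℕ)):ℝ) := by
        apply Finset.sum_congr rfl; intro j _
        apply Finset.sum_congr rfl; intro k _
        rw [Finset.mul_sum]
        apply Finset.sum_congr rfl; intro i _
        ring
    _ = ∑ i ∈ range N, ∑ j ∈ range (i+1), ∑ k ∈ Ico (i+1) N,
          2 * fibA idx ψ i j * fibA idx ψ i k / (((k-j : ℕ)):ℝ) :=
        triple_reorder N (fun j k i => 2 * fibA idx ψ i j * fibA idx ψ i k / (((k-j : ℕ)):ℝ))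
    _ ≤ ∑ i ∈ range N, π * ∑ j ∈ range N, fibM idx ψ i j := by
        apply Finset.sum_le_sum; intro i hi
        exact per_i_bound N idx ψ i (Finset.mem_range.mp hi)
    _ = π * ∑ j ∈ range N, ∑ i ∈ range N, fibM idx ψ i j := by
        rw [← Finset.mul_sum, Finset.sum_comm]
    _ ≤ π * ∑ j ∈ range N, (1:ℝ) := by
        apply mul_le_mul_of_nonneg_left _ Real.pi_pos.le
        apply Finset.sum_le_sum
        intro j hj
        exact fibM_total idx N ψ j (hψ j (Finset.mem_range.mp hj))
    _ = π * N := by simp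

end StepCore

section Harmonic

noncomputable def HN (N : ℕ) : ℝ := ∑ k ∈ Finset.Icc 1 N, (1:ℝ)/k

lemma HN_eq_range (N : ℕ) : HN N = ∑ j ∈ range N, (1:ℝ)/((j:ℝ)+1) := by
  induction N with
  | zero => simp [HN]
  | succ N ih =>
    rw [HN, Finset.sum_Icc_succ_top (by omega), ← HN, ih, Finset.sum_range_succ]
    push_cast
    ring_nf

lemma gamma_sum (N : ℕ) :
    ∑ j ∈ range N, ∑ k ∈ Ico (j+1) N, (1/(((k-j : ℕ)):ℝ)) = N * HN N - N := by
  induction N with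
  | zero => simp
  | succ N ih =>
    have hsplit : ∑ j ∈ range (N+1), ∑ k ∈ Ico (j+1) (N+1), (1/(((k-j : ℕ)):ℝ))
        = (∑ j ∈ range N, ∑ k ∈ Ico (j+1) N, (1/(((k-j : ℕ)):ℝ)))
          + ∑ j ∈ range N, (1/(((N-j : ℕ)):ℝ)) := by
      rw [Finset.sum_range_succ]
      rw [show (Ico (N+1) (N+1) : Finset ℕ) = ∅ from Finset.Ico_self _]
      rw [Finset.sum_empty, add_zero, ← Finset.sum_add_distrib]
      apply Finset.sum_congr rfl
      intro j hj
      simp only [Finset.mem_range] at hj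
      rw [Finset.sum_Ico_succ_top (by omega)]
    have hrefl : ∑ j ∈ range N, (1/(((N-j : ℕ)):ℝ)) = HN N := by
      rw [HN_eq_range, ← Finset.sum_range_reflect]
      apply Finset.sum_congr rfl
      intro j hj
      simp only [Finset.mem_range] at hj
      have h1 : N - (N - 1 - j) = j + 1 := by omega
      rw [h1]
      push_cast
      ring
    rw [hsplit, ih, hrefl]
    have hHsucc : HN (N+1) = HN N + 1/((N:ℝ)+1) := by
      rw [HN, Finset.sum_Icc_succ_top (by omega), ← HN]
      push_cast
      ring_nf
    rw [hHsucc]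
    have hNne : ((N:ℝ)+1) ≠ 0 := by positivity
    push_cast
    field_simp
    ring
end Harmonic

section Log

lemma log_lt_HN (N : ℕ) (hN : 0 < N) : Real.log N < HN N := by
  have key : ∀ n : ℕ, Real.log (n+1) ≤ HN n := by
    intro n
    induction n with
    | zero => simp [HN]
    | succ n ih =>
      have h1 : (0:ℝ) < (n:ℝ)+1 := by positivity
      have h2 : (0:ℝ) < (n:ℝ)+2 := by positivity
      have hlog : Real.log ((n:ℝ)+2) - Real.log ((n:ℝ)+1) ≤ 1/((n:ℝ)+1) := by
        rw [← Real.log_div (by positivity) (by positivity)]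
        calc Real.log (((n:ℝ)+2)/((n:ℝ)+1)) ≤ ((n:ℝ)+2)/((n:ℝ)+1) - 1 :=
              Real.log_le_sub_one_of_pos (by positivity)
          _ = 1/((n:ℝ)+1) := by field_simp; norm_num
      have hHsucc : HN (n+1) = HN n + 1/((n:ℝ)+1) := by
        rw [HN, Finset.sum_Icc_succ_top (by omega), ← HN]
        push_cast
        ring_nf
      rw [hHsucc]
      push_cast
      push_cast at ih
      rw [show ((n:ℝ)+1+1) = (n:ℝ)+2 from by ring]
      linarith
  calc Real.log N < Real.log (N+1) :=
        Real.log_lt_log (by positivity) (by push_cast; linarith)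
    _ ≤ HN N := key N
end Log

section Overlap
variable {M : ℕ}

lemma norm_sq_sum (ψ : EuclideanSpace ℂ (Fin M)) : ‖ψ‖^2 = ∑ b : Fin M, ‖ψ b‖^2 := by
  rw [EuclideanSpace.norm_eq, Real.sq_sqrt (Finset.sum_nonneg fun _ _ => sq_nonneg _)]

lemma overlap_bound (ε : ℝ) (hε0 : 0 ≤ ε) (hε1 : ε ≤ 1/2)
    (ψ φ : EuclideanSpace ℂ (Fin M)) (hψ : ‖ψ‖ = 1) (hφ : ‖φ‖ = 1)
    (S S' : Finset (Fin M)) (hdisj : Disjoint S S')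
    (hψS : 1 - ε ≤ ∑ b ∈ S, ‖ψ b‖^2) (hφS' : 1 - ε ≤ ∑ b ∈ S', ‖φ b‖^2) :
    RCLike.re (inner (𝕜 := ℂ) ψ φ) ≤ 2 * Real.sqrt (ε * (1-ε)) := by
  have hε1' : (0:ℝ) ≤ 1 - ε := by linarith
  have hroot : Real.sqrt ε ≤ Real.sqrt (1-ε) := Real.sqrt_le_sqrt (by linarith)
  set c : ℝ := Real.sqrt (1-ε) - Real.sqrt ε with hc
  have hc0 : 0 ≤ c := by rw [hc]; linarith
  have part : ∀ (T : Finset (Fin M)) (χ ξ : EuclideanSpace ℂ (Fin M)),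
      1 - ε ≤ (∑ b ∈ T, ‖χ b‖^2) → (∑ b ∈ T, ‖ξ b‖^2) ≤ ε →
      c^2 ≤ ∑ b ∈ T, ‖χ b - ξ b‖^2 := by
    intro T χ ξ hA hB
    set A : ℝ := ∑ b ∈ T, ‖χ b‖^2 with hAdef
    set B : ℝ := ∑ b ∈ T, ‖ξ b‖^2 with hBdef
    have hA0 : 0 ≤ A := Finset.sum_nonneg fun _ _ => sq_nonneg _
    have hB0 : 0 ≤ B := Finset.sum_nonneg fun _ _ => sq_nonneg _
    have hAB : ∑ b ∈ T, ‖χ b‖ * ‖ξ b‖ ≤ Real.sqrt A * Real.sqrt B :=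
      sum_mul_le_sqrt T (fun b => ‖χ b‖) (fun b => ‖ξ b‖)
    have hexp : ∑ b ∈ T, (‖χ b‖ - ‖ξ b‖)^2
        = A + B - 2*(∑ b ∈ T, ‖χ b‖ * ‖ξ b‖) := by
      have h : ∀ b : Fin M, (‖χ b‖ - ‖ξ b‖)^2
          = ‖χ b‖^2 + ‖ξ b‖^2 - 2*(‖χ b‖*‖ξ b‖) := fun b => by ring
      simp only [h]
      rw [Finset.sum_sub_distrib, Finset.sum_add_distrib, ← Finset.mul_sum]
    have hterm : ∑ b ∈ T, (‖χ b‖ - ‖ξ b‖)^2 ≤ ∑ b ∈ T, ‖χ b - ξ b‖^2 := by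
      apply Finset.sum_le_sum
      intro b _
      have h1 := abs_norm_sub_norm_le (χ b) (ξ b)
      have h2 : |‖χ b‖ - ‖ξ b‖|^2 = (‖χ b‖ - ‖ξ b‖)^2 := sq_abs _
      nlinarith [abs_nonneg (‖χ b‖ - ‖ξ b‖), norm_nonneg (χ b - ξ b)]
    have hsA : Real.sqrt (1-ε) ≤ Real.sqrt A := Real.sqrt_le_sqrt hA
    have hsB : Real.sqrt B ≤ Real.sqrt ε := Real.sqrt_le_sqrt hB
    have hcsq : c ≤ Real.sqrt A - Real.sqrt B := by rw [hc]; linarith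
    have hAB0 : 0 ≤ Real.sqrt A - Real.sqrt B := le_trans hc0 hcsq
    calc c^2 ≤ (Real.sqrt A - Real.sqrt B)^2 := by nlinarith
      _ = A + B - 2*(Real.sqrt A * Real.sqrt B) := by
          rw [sub_sq, Real.sq_sqrt hA0, Real.sq_sqrt hB0]; ring
      _ ≤ A + B - 2*(∑ b ∈ T, ‖χ b‖ * ‖ξ b‖) := by linarith
      _ = ∑ b ∈ T, (‖χ b‖ - ‖ξ b‖)^2 := hexp.symm
      _ ≤ ∑ b ∈ T, ‖χ b - ξ b‖^2 := hterm
  -- mass bounds on the opposite sets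
  have hmass : ∀ (ξ : EuclideanSpace ℂ (Fin M)), ‖ξ‖ = 1 →
      ∀ (T T' : Finset (Fin M)), Disjoint T T' → 1 - ε ≤ (∑ b ∈ T', ‖ξ b‖^2) →
      (∑ b ∈ T, ‖ξ b‖^2) ≤ ε := by
    intro ξ hξ T T' hd hT'
    have hun : ∑ b ∈ T ∪ T', ‖ξ b‖^2 = (∑ b ∈ T, ‖ξ b‖^2) + ∑ b ∈ T', ‖ξ b‖^2 :=
      Finset.sum_union hd
    have hle : ∑ b ∈ T ∪ T', ‖ξ b‖^2 ≤ 1 := by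
      rw [show (1:ℝ) = ∑ b : Fin M, ‖ξ b‖^2 from by rw [← norm_sq_sum, hξ]; norm_num]
      exact Finset.sum_le_sum_of_subset_of_nonneg (Finset.subset_univ _)
        (fun _ _ _ => sq_nonneg _)
    linarith
  have hB1 : (∑ b ∈ S, ‖φ b‖^2) ≤ ε := hmass φ hφ S S' hdisj hφS'
  have hB2 : (∑ b ∈ S', ‖ψ b‖^2) ≤ ε := hmass ψ hψ S' S hdisj.symm hψS
  have hS1 : c^2 ≤ ∑ b ∈ S, ‖ψ b - φ b‖^2 := part S ψ φ hψS hB1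
  have hS2 : c^2 ≤ ∑ b ∈ S', ‖ψ b - φ b‖^2 := by
    have := part S' φ ψ hφS' hB2
    calc c^2 ≤ ∑ b ∈ S', ‖φ b - ψ b‖^2 := this
      _ = ∑ b ∈ S', ‖ψ b - φ b‖^2 :=
        Finset.sum_congr rfl fun b _ => by rw [norm_sub_rev]
  have hlower : 2*c^2 ≤ ‖ψ - φ‖^2 := by
    have hunion : (∑ b ∈ S, ‖ψ b - φ b‖^2) + ∑ b ∈ S', ‖ψ b - φ b‖^2
        = ∑ b ∈ S ∪ S', ‖ψ b - φ b‖^2 := (Finset.sum_union hdisj).symm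
    have hle : ∑ b ∈ S ∪ S', ‖ψ b - φ b‖^2 ≤ ∑ b : Fin M, ‖ψ b - φ b‖^2 :=
      Finset.sum_le_sum_of_subset_of_nonneg (Finset.subset_univ _)
        (fun _ _ _ => sq_nonneg _)
    have heq : ∑ b : Fin M, ‖ψ b - φ b‖^2 = ‖ψ - φ‖^2 := by
      rw [norm_sq_sum (ψ - φ)]
      exact Finset.sum_congr rfl fun b _ => by rw [PiLp.sub_apply]
    linarith
  have hre : ‖ψ - φ‖^2 = 2 - 2*RCLike.re (inner (𝕜 := ℂ) ψ φ) := by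
    rw [norm_sub_sq (𝕜 := ℂ), hψ, hφ]; ring
  have hc2 : c^2 = 1 - 2*Real.sqrt (ε*(1-ε)) := by
    have hmul : Real.sqrt (1-ε) * Real.sqrt ε = Real.sqrt (ε*(1-ε)) := by
      rw [← Real.sqrt_mul hε1' ε, mul_comm (1-ε) ε]
    rw [hc, sub_sq, Real.sq_sqrt hε1', Real.sq_sqrt hε0, ← hmul]
    ring
  linarith

end Overlap

end AuxLemmas

section FvalAux

lemma xin_sorted (N j : ℕ) (hj : j < N) : SortedNonzero N (fun i => decide (j ≤ i)) := by
  constructor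
  · intro i i' hii' _ hi
    simp only [decide_eq_true_eq] at hi ⊢
    omega
  · exact ⟨j, hj, by simp⟩

lemma xin_fval (j : ℕ) : fval (fun i => decide (j ≤ i)) = j := by
  unfold fval
  have h1 : sInf {i | (fun i => decide (j ≤ i)) i = true} ≤ j :=
    Nat.sInf_le (by simp)
  have h2 : j ≤ sInf {i | (fun i => decide (j ≤ i)) i = true} := by
    have hne : {i | (fun i => decide (j ≤ i)) i = true}.Nonempty := ⟨j, by simp⟩
    have := Nat.sInf_mem hne
    simpa using this
  omega

end FvalAux

/-- Lower bound for ordered searching: any quantum query algorithm that finds the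
leftmost `1` of every sorted nonzero `N`-bit string with error probability at most `ε`
uses at least `(1 − 2√(ε(1−ε)))(H_N − 1)/π` queries; in particular any exact algorithm
uses more than `(ln N − 1)/π` queries. -/
theorem ordered_search_lower_bound
    (N M T : ℕ) (hN : 0 < N) (ε : ℝ) (hε0 : 0 ≤ ε) (hε1 : ε ≤ 1 / 2)
    (U : EuclideanSpace ℂ (Fin M) ≃ₗᵢ[ℂ] EuclideanSpace ℂ (Fin M))
    (idx : Fin M → ℕ) (ans : Fin M → ℕ)
    (init : EuclideanSpace ℂ (Fin M)) (hinit : ‖init‖ = 1)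
    (hcorrect : ∀ x : ℕ → Bool, SortedNonzero N x →
      1 - ε ≤ successProb ans (fval x) (stateAfter N M U idx x init T)) :
    (1 - 2 * Real.sqrt (ε * (1 - ε))) *
        ((∑ k ∈ Finset.Icc 1 N, (1 : ℝ) / k) - 1) / Real.pi ≤ (T : ℝ) ∧
    (ε = 0 → (Real.log N - 1) / Real.pi < (T : ℝ)) := by
  classical
  set s : ℝ := Real.sqrt (ε * (1 - ε)) with hs
  set xin : ℕ → ℕ → Bool := fun j i => decide (j ≤ i) with hxin
  set P : ℕ → ℕ → EuclideanSpace ℂ (Fin M) :=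
    fun j t => stateAfter N M U idx (xin j) init t with hP
  set W : ℕ → ℝ := fun t => ∑ j ∈ Finset.range N, ∑ k ∈ Finset.Ico (j+1) N,
    (1/(((k-j : ℕ)):ℝ)) * RCLike.re (inner (𝕜 := ℂ) (P j t) (P k t)) with hW
  have hnorm : ∀ j t, ‖P j t‖ = 1 := fun j t =>
    norm_stateAfter U idx (xin j) init hinit t
  have hP0 : ∀ j, P j 0 = U init := fun j => rfl
  have hPsucc : ∀ j t, P j (t+1) = U (oracleApply N M (xin j) idx (P j t)) :=
    fun j t => rfl
  have hre1 : RCLike.re (inner (𝕜 := ℂ) ((U init) : EuclideanSpace ℂ (Fin M)) (U init)) = 1 := by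
    rw [inner_self_eq_norm_sq, U.norm_map, hinit]
    norm_num
  have hW0 : W 0 = N * HN N - N := by
    rw [hW]
    calc ∑ j ∈ Finset.range N, ∑ k ∈ Finset.Ico (j+1) N,
          (1/(((k-j : ℕ)):ℝ)) * RCLike.re (inner (𝕜 := ℂ) (P j 0) (P k 0))
        = ∑ j ∈ Finset.range N, ∑ k ∈ Finset.Ico (j+1) N, (1/(((k-j : ℕ)):ℝ)) := by
          apply Finset.sum_congr rfl; intro j _
          apply Finset.sum_congr rfl; intro k _
          rw [hP0, hP0, hre1, mul_one]
      _ = N * HN N - N := gamma_sum N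
  have hstep : ∀ t : ℕ, W t - W (t+1) ≤ Real.pi * N := by
    intro t
    have hdiff : W t - W (t+1)
        = ∑ j ∈ Finset.range N, ∑ k ∈ Finset.Ico (j+1) N, (1/(((k-j : ℕ)):ℝ)) *
            (∑ b ∈ Finset.univ.filter (fun b : Fin M => j ≤ idx b ∧ idx b < k),
              2 * ((starRingEnd ℂ) (P j t b) * P k t b).re) := by
      rw [hW]
      rw [← Finset.sum_sub_distrib]
      apply Finset.sum_congr rfl; intro j hj
      rw [← Finset.sum_sub_distrib]
      apply Finset.sum_congr rfl; intro k hk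
      simp only [Finset.mem_range] at hj
      simp only [Finset.mem_Ico] at hk
      rw [← mul_sub]
      congr 1
      rw [hPsucc, hPsucc, LinearIsometryEquiv.inner_map_map]
      exact inner_oracle_diff j k hk.1 hk.2 idx (P j t) (P k t)
    rw [hdiff]
    exact step_core N idx (fun j => P j t)
      (fun j _ => sum_sq_of_norm_one (P j t) (hnorm j t))
  have htel : ∀ n : ℕ, W 0 - W n ≤ n * (Real.pi * N) := by
    intro n
    induction n with
    | zero => simp
    | succ n ih =>
      have := hstep n
      push_cast
      push_cast at ih
      linarith
  have hpair : ∀ j k : ℕ, j < N → k < N → j ≠ k →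
      RCLike.re (inner (𝕜 := ℂ) (P j T) (P k T)) ≤ 2 * s := by
    intro j k hj hk hjk
    have h1 := hcorrect (xin j) (xin_sorted N j hj)
    have h2 := hcorrect (xin k) (xin_sorted N k hk)
    rw [show fval (xin j) = j from xin_fval j] at h1
    rw [show fval (xin k) = k from xin_fval k] at h2
    unfold successProb at h1 h2
    have hdisj : Disjoint (Finset.univ.filter (fun b : Fin M => ans b = j))
        (Finset.univ.filter (fun b : Fin M => ans b = k)) := by
      rw [Finset.disjoint_left]
      intro b hb hb'
      simp only [Finset.mem_filter] at hb hb'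
      exact hjk (hb.2 ▸ hb'.2 ▸ rfl)
    exact overlap_bound ε hε0 hε1 (P j T) (P k T) (hnorm j T) (hnorm k T)
      _ _ hdisj h1 h2
  have hWT : W T ≤ (2*s) * (N * HN N - N) := by
    rw [hW, ← gamma_sum N, Finset.mul_sum]
    apply Finset.sum_le_sum; intro j hj
    rw [Finset.mul_sum]
    apply Finset.sum_le_sum; intro k hk
    simp only [Finset.mem_range] at hj
    simp only [Finset.mem_Ico] at hk
    have hple := hpair j k hj hk.2 (by omega)
    calc (1/(((k-j : ℕ)):ℝ)) * RCLike.re (inner (𝕜 := ℂ) (P j T) (P k T))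
        ≤ (1/(((k-j : ℕ)):ℝ)) * (2*s) :=
          mul_le_mul_of_nonneg_left hple (by positivity)
      _ = 2*s * (1/(((k-j : ℕ)):ℝ)) := by ring
  have hNR : (0:ℝ) < (N:ℝ) := by exact_mod_cast hN
  have key : (1 - 2*s) * (HN N - 1) ≤ (T:ℝ) * Real.pi := by
    have h1 : W 0 - W T ≤ T * (Real.pi * N) := htel T
    have hring : (1 - 2*s) * ((N:ℝ) * (HN N - 1))
        = ((N:ℝ) * HN N - N) - 2*s*((N:ℝ) * HN N - N) := by ring
    have h2 : (1 - 2*s) * ((N:ℝ) * (HN N - 1)) ≤ (T:ℝ) * (Real.pi * N) := by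
      rw [hring]
      rw [hW0] at h1
      linarith [hWT]
    have h3 : ((1 - 2*s) * (HN N - 1)) * (N:ℝ) ≤ ((T:ℝ) * Real.pi) * (N:ℝ) := by
      calc ((1 - 2*s) * (HN N - 1)) * (N:ℝ)
          = (1 - 2*s) * ((N:ℝ) * (HN N - 1)) := by ring
        _ ≤ (T:ℝ) * (Real.pi * N) := h2
        _ = ((T:ℝ) * Real.pi) * (N:ℝ) := by ring
    exact le_of_mul_le_mul_right h3 hNR
  have hHNdef : HN N = ∑ k ∈ Finset.Icc 1 N, (1:ℝ)/k := rfl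
  constructor
  · rw [div_le_iff₀ Real.pi_pos, ← hHNdef]
    exact key
  · intro hε
    subst hε
    have hs0 : s = 0 := by rw [hs]; norm_num
    rw [hs0] at key
    have hlog := log_lt_HN N hN
    rw [div_lt_iff₀ Real.pi_pos]
    nlinarith [key, hlog]
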